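/- One has α(x) := 4 (∫₀ˣ f(t) dt)(∫ₓ^∞ t f(t) dt) − x/2 + 2x (∫₀ˣ f(t) dt)² = 0 for all x ≥ 0 if and only if there exists a > 0 such that f(t) = 1/(2a) for 0 ≤ t ≤ a and f(t) = 0 for t > a (almost everywhere), i.e. f is the density of a continuous uniform distribution on [0, a] scaled to total mass 1/2. -/

import Mathlib

open MeasureTheory Set

namespace AlphaUniform

/-- right-limit surrogate: sup of `f` on `(x, ∞)` -/
noncomputable def fp (f : ℝ → ℝ) (x : ℝ) : ℝ := sSup (f '' Set.Ioi x)
noncomputable def G (f : ℝ → ℝ) (x : ℝ) : ℝ := ∫ t in Set.Ioi x, f t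
noncomputable def M (f : ℝ → ℝ) (x : ℝ) : ℝ := ∫ t in Set.Ioi x, t * f t

structure Hyp (f : ℝ → ℝ) : Prop where
  nonneg : ∀ t, 0 ≤ t → 0 ≤ f t
  mono : ∀ x y : ℝ, 0 ≤ x → x ≤ y → f y ≤ f x
  int : IntegrableOn f (Set.Ioi 0)
  total : (∫ t in Set.Ioi (0:ℝ), f t) = 1/2
  mom : IntegrableOn (fun t => t * f t) (Set.Ioi 0)

namespace Hyp

variable {f : ℝ → ℝ}

lemma intIoi (h : Hyp f) {x : ℝ} (hx : 0 ≤ x) : IntegrableOn f (Ioi x) :=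
  h.int.mono_set (Ioi_subset_Ioi hx)

lemma intIoc (h : Hyp f) {x y : ℝ} (hx : 0 ≤ x) : IntegrableOn f (Ioc x y) :=
  h.int.mono_set ((Ioc_subset_Ioi_self).trans (Ioi_subset_Ioi hx))

lemma momIoi (h : Hyp f) {x : ℝ} (hx : 0 ≤ x) : IntegrableOn (fun t => t * f t) (Ioi x) :=
  h.mom.mono_set (Ioi_subset_Ioi hx)

lemma momIoc (h : Hyp f) {x y : ℝ} (hx : 0 ≤ x) : IntegrableOn (fun t => t * f t) (Ioc x y) :=
  h.mom.mono_set ((Ioc_subset_Ioi_self).trans (Ioi_subset_Ioi hx))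

lemma split (h : Hyp f) {x y : ℝ} (hx : 0 ≤ x) (hxy : x ≤ y) :
    G f x = (∫ t in Ioc x y, f t) + G f y := by
  rw [G, G, ← setIntegral_union (Ioc_disjoint_Ioi le_rfl) measurableSet_Ioi
      (h.intIoc hx) (h.intIoi (hx.trans hxy)), Ioc_union_Ioi_eq_Ioi hxy]

lemma splitM (h : Hyp f) {x y : ℝ} (hx : 0 ≤ x) (hxy : x ≤ y) :
    M f x = (∫ t in Ioc x y, t * f t) + M f y := by
  rw [M, M, ← setIntegral_union (Ioc_disjoint_Ioi le_rfl) measurableSet_Ioi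
      (h.momIoc hx) (h.momIoi (hx.trans hxy)), Ioc_union_Ioi_eq_Ioi hxy]

lemma iocNonneg (h : Hyp f) {x y : ℝ} (hx : 0 ≤ x) : 0 ≤ ∫ t in Ioc x y, f t :=
  setIntegral_nonneg measurableSet_Ioc fun t ht => h.nonneg t (hx.trans ht.1.le)

lemma G_nonneg (h : Hyp f) {x : ℝ} (hx : 0 ≤ x) : 0 ≤ G f x :=
  setIntegral_nonneg measurableSet_Ioi fun t ht => h.nonneg t (hx.trans (le_of_lt ht))

lemma G_antitone (h : Hyp f) {x y : ℝ} (hx : 0 ≤ x) (hxy : x ≤ y) : G f y ≤ G f x := by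
  rw [h.split hx hxy]; linarith [h.iocNonneg (y := y) hx]

lemma bddAbove_im (h : Hyp f) {x : ℝ} (hx : 0 ≤ x) : BddAbove (f '' Ioi x) := by
  refine ⟨f x, ?_⟩
  rintro _ ⟨t, ht, rfl⟩
  exact h.mono x t hx (le_of_lt ht)

lemma le_fp (h : Hyp f) {x t : ℝ} (hx : 0 ≤ x) (ht : x < t) : f t ≤ fp f x :=
  le_csSup (h.bddAbove_im hx) (mem_image_of_mem f ht)

lemma fp_le (h : Hyp f) {x : ℝ} (hx : 0 ≤ x) : fp f x ≤ f x :=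
  csSup_le (Set.Nonempty.image f ⟨x + 1, by simp [lt_add_one]⟩)
    (by rintro _ ⟨t, ht, rfl⟩; exact h.mono x t hx (le_of_lt ht))

lemma fp_nonneg (h : Hyp f) {x : ℝ} (hx : 0 ≤ x) : 0 ≤ fp f x :=
  le_trans (h.nonneg (x+1) (by linarith)) (h.le_fp hx (lt_add_one x))

lemma tendsto_fp (h : Hyp f) {x : ℝ} (hx : 0 ≤ x) : Filter.Tendsto f (nhdsWithin x (Ioi x)) (nhds (fp f x)) :=
  AntitoneOn.tendsto_nhdsGT
    (fun a ha b hb hab => h.mono a b (hx.trans (le_of_lt ha)) hab) (h.bddAbove_im hx)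


lemma ioc_const (c x y : ℝ) (hxy : x ≤ y) : (∫ _ in Ioc x y, c) = (y - x) * c := by
  rw [setIntegral_const, Real.volume_real_Ioc_of_le hxy, smul_eq_mul]

lemma ioc_le (h : Hyp f) {x y : ℝ} (hx : 0 ≤ x) (hxy : x ≤ y) :
    ∫ t in Ioc x y, f t ≤ (y - x) * fp f x := by
  rw [← ioc_const (fp f x) x y hxy]
  exact setIntegral_mono_on (h.intIoc hx) (integrableOn_const measure_Ioc_lt_top.ne)
    measurableSet_Ioc (fun t ht => h.le_fp hx ht.1)

lemma le_ioc (h : Hyp f) {x y : ℝ} (hx : 0 ≤ x) (hxy : x ≤ y) :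
    (y - x) * f y ≤ ∫ t in Ioc x y, f t := by
  rw [← ioc_const (f y) x y hxy]
  exact setIntegral_mono_on (integrableOn_const measure_Ioc_lt_top.ne) (h.intIoc hx)
    measurableSet_Ioc (fun t ht => h.mono t y (hx.trans ht.1.le) ht.2)

lemma iocM_le (h : Hyp f) {x y : ℝ} (hx : 0 ≤ x) (hxy : x ≤ y) :
    ∫ t in Ioc x y, t * f t ≤ (y - x) * (y * fp f x) := by
  rw [← ioc_const (y * fp f x) x y hxy]
  refine setIntegral_mono_on (h.momIoc hx) (integrableOn_const measure_Ioc_lt_top.ne)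
    measurableSet_Ioc (fun t ht => ?_)
  exact mul_le_mul ht.2 (h.le_fp hx ht.1) (h.nonneg t (hx.trans ht.1.le)) (hx.trans hxy)

lemma le_iocM (h : Hyp f) {x y : ℝ} (hx : 0 ≤ x) (hxy : x ≤ y) :
    (y - x) * (x * f y) ≤ ∫ t in Ioc x y, t * f t := by
  rw [← ioc_const (x * f y) x y hxy]
  refine setIntegral_mono_on (integrableOn_const measure_Ioc_lt_top.ne) (h.momIoc hx)
    measurableSet_Ioc (fun t ht => ?_)
  exact mul_le_mul ht.1.le (h.mono t y (hx.trans ht.1.le) ht.2)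
    (h.nonneg y (hx.trans hxy)) (hx.trans ht.1.le)

lemma hasDerivG (h : Hyp f) {x : ℝ} (hx : 0 ≤ x) :
    HasDerivWithinAt (G f) (-(fp f x)) (Ici x) x := by
  rw [hasDerivWithinAt_iff_tendsto_slope, Ici_sdiff_left]
  apply tendsto_of_tendsto_of_tendsto_of_le_of_le' (g := fun _ => -(fp f x))
    (h := fun y => -(f y)) tendsto_const_nhds (h.tendsto_fp hx).neg
  · filter_upwards [self_mem_nhdsWithin] with y (hy : x < y)
    rw [slope_def_field]
    have hsplit : G f y - G f x = -(∫ t in Ioc x y, f t) := by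
      rw [h.split hx hy.le]; ring
    rw [hsplit, neg_div]
    rw [neg_le_neg_iff, div_le_iff₀ (by linarith)]
    have := h.ioc_le hx hy.le
    linarith [this]
  · filter_upwards [self_mem_nhdsWithin] with y (hy : x < y)
    rw [slope_def_field]
    have hsplit : G f y - G f x = -(∫ t in Ioc x y, f t) := by
      rw [h.split hx hy.le]; ring
    rw [hsplit, neg_div, neg_le_neg_iff, le_div_iff₀ (by linarith)]
    have := h.le_ioc hx hy.le
    linarith [this]

lemma hasDerivM (h : Hyp f) {x : ℝ} (hx : 0 ≤ x) :
    HasDerivWithinAt (M f) (-(x * fp f x)) (Ici x) x := by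
  rw [hasDerivWithinAt_iff_tendsto_slope, Ici_sdiff_left]
  apply tendsto_of_tendsto_of_tendsto_of_le_of_le' (g := fun y => -(y * fp f x))
    (h := fun y => -(x * f y)) ?_ ?_
  · filter_upwards [self_mem_nhdsWithin] with y (hy : x < y)
    rw [slope_def_field]
    have hsplit : M f y - M f x = -(∫ t in Ioc x y, t * f t) := by
      rw [h.splitM hx hy.le]; ring
    rw [hsplit, neg_div, neg_le_neg_iff, div_le_iff₀ (by linarith)]
    have := h.iocM_le hx hy.le
    linarith [this]
  · filter_upwards [self_mem_nhdsWithin] with y (hy : x < y)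
    rw [slope_def_field]
    have hsplit : M f y - M f x = -(∫ t in Ioc x y, t * f t) := by
      rw [h.splitM hx hy.le]; ring
    rw [hsplit, neg_div, neg_le_neg_iff, le_div_iff₀ (by linarith)]
    have := h.le_iocM hx hy.le
    linarith [this]
  · exact (((continuous_id.tendsto x).mono_left nhdsWithin_le_nhds).mul tendsto_const_nhds).neg
  · exact ((h.tendsto_fp hx).const_mul x).neg


lemma Fpos (h : Hyp f) {x : ℝ} (hx : 0 < x) : 0 < ∫ t in Ioc 0 x, f t := by
  rcases lt_or_eq_of_le (h.iocNonneg (x := 0) (y := x) le_rfl) with hlt | heq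
  · exact hlt
  exfalso
  have hzero : ∀ t, 0 < t → f t = 0 := by
    intro t ht
    rcases le_or_gt t x with htx | htx
    · have h1 : (t - 0) * f t ≤ ∫ s in Ioc 0 t, f s := h.le_ioc le_rfl ht.le
      have h2 : (∫ s in Ioc 0 t, f s) + (∫ s in Ioc t x, f s) = ∫ s in Ioc 0 x, f s := by
        have := h.split (x := 0) (y := t) le_rfl ht.le
        have := h.split (x := t) (y := x) ht.le htx
        have := h.split (x := 0) (y := x) le_rfl (ht.le.trans htx)
        linarith
      have h3 : 0 ≤ ∫ s in Ioc t x, f s := h.iocNonneg ht.le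
      have h4 : (t - 0) * f t ≤ 0 := by linarith [h1, h2, h3, heq.symm ▸ (le_refl (0:ℝ))]
      have h5 : 0 ≤ f t := h.nonneg t ht.le
      nlinarith
    · have hfx : f x = 0 := by
        have h1 : (x - 0) * f x ≤ ∫ s in Ioc 0 x, f s := h.le_ioc le_rfl hx.le
        have h5 : 0 ≤ f x := h.nonneg x hx.le
        nlinarith [heq.symm]
      have := h.mono x t hx.le htx.le
      have := h.nonneg t (hx.le.trans htx.le)
      linarith
  have : G f 0 = 0 := by
    rw [G, show (∫ t in Ioi (0:ℝ), f t) = ∫ t in Ioi (0:ℝ), (0:ℝ) from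
      setIntegral_congr_fun measurableSet_Ioi (fun t ht => hzero t ht)]
    simp
  rw [G, h.total] at this
  norm_num at this

lemma W_eq (h : Hyp f) {x : ℝ} (hx : 0 ≤ x) :
    1 - 2 * G f x = 2 * ∫ t in Ioc 0 x, f t := by
  have := h.split (x := 0) (y := x) le_rfl hx
  rw [G, h.total] at this
  linarith

lemma W_pos (h : Hyp f) {x : ℝ} (hx : 0 < x) : 0 < 1 - 2 * G f x := by
  rw [h.W_eq hx.le]; linarith [h.Fpos hx]

lemma W_le_one (h : Hyp f) {x : ℝ} (hx : 0 ≤ x) : 1 - 2 * G f x ≤ 1 := by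
  linarith [h.G_nonneg hx]

lemma G_contOn (h : Hyp f) {c : ℝ} (hc : 0 < c) : ContinuousOn (G f) (Ici c) := by
  have : LipschitzOnWith (Real.toNNReal (f c)) (G f) (Ici c) := by
    apply LipschitzOnWith.of_dist_le_mul
    intro u hu v hv
    wlog huv : v ≤ u generalizing u v
    · rw [dist_comm, dist_comm u v]; exact this v hv u hu (le_of_not_ge huv)
    have h1 : G f v - G f u = ∫ t in Ioc v u, f t := by
      have := h.split (x := v) (y := u) (hc.le.trans hv) huv; linarith
    have h2 : 0 ≤ ∫ t in Ioc v u, f t := h.iocNonneg (hc.le.trans hv)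
    have h3 : (∫ t in Ioc v u, f t) ≤ (u - v) * fp f v := h.ioc_le (hc.le.trans hv) huv
    have h4 : fp f v ≤ f c := (h.fp_le (hc.le.trans hv)).trans (h.mono c v hc.le hv)
    rw [Real.dist_eq, Real.dist_eq, Real.coe_toNNReal _ (h.nonneg c hc.le)]
    rw [abs_sub_comm, abs_of_nonneg (by linarith), abs_of_nonneg (by linarith)]
    nlinarith [h.nonneg c hc.le, h.fp_nonneg (hc.le.trans hv)]
  exact this.continuousOn


lemma key (h : Hyp f)
    (hid : ∀ y : ℝ, 0 < y →
      M f y = y * (1 - (1 - 2 * G f y)^2) / (4 * (1 - 2 * G f y)))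
    {x : ℝ} (hx : 0 < x) (hGx : 0 < G f x) :
    2 * x * fp f x = 1 - 2 * G f x := by
  set p := fp f x with hp
  set W : ℝ → ℝ := fun y => 1 - 2 * G f y with hWdef
  set w := W x with hw
  have hw0 : 0 < w := h.W_pos hx
  have hw1 : w < 1 := by
    have := hGx; simp only [hw, hWdef]; linarith
  have hW : HasDerivWithinAt W (2 * p) (Ici x) x := by
    have := ((h.hasDerivG hx.le).const_mul 2).const_sub 1
    rw [show 2 * p = -(2 * -fp f x) by ring]; exact this
  have hW2 : HasDerivWithinAt (fun y => (W y)^2) (2 * w ^ 1 * (2 * p)) (Ici x) x := hW.pow 2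
  have hnum : HasDerivWithinAt (fun y => y * (1 - (W y)^2))
      (1 * (1 - w^2) + x * (-(2 * w ^ 1 * (2 * p)))) (Ici x) x :=
    (hasDerivWithinAt_id x _).mul (hW2.const_sub 1)
  have hden : HasDerivWithinAt (fun y => 4 * W y) (4 * (2 * p)) (Ici x) x := hW.const_mul 4
  have hden0 : 4 * w ≠ 0 := by linarith
  have hPhi := hnum.div hden hden0
  have hM : HasDerivWithinAt (fun y => y * (1 - (W y)^2) / (4 * W y)) (-(x * p)) (Ici x) x := by
    refine (h.hasDerivM hx.le).congr (fun y hy => ?_) ?_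
    · exact (hid y (hx.trans_le hy)).symm
    · exact (hid x hx).symm
  have heq := UniqueDiffWithinAt.eq_deriv _ (uniqueDiffOn_Ici x x self_mem_Ici) hPhi hM
  have hfac : (1 - w^2) * (w - 2 * x * p) = 0 := by
    have hw' : w ≠ 0 := hw0.ne'
    rw [← hw] at heq
    field_simp at heq
    nlinarith [heq]
  have h1w : 1 - w^2 ≠ 0 := by nlinarith
  have := (mul_eq_zero.1 hfac).resolve_left h1w
  have hww : w = 1 - 2 * G f x := rfl
  linarith


lemma Kconst (h : Hyp f)
    (hid : ∀ y : ℝ, 0 < y →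
      M f y = y * (1 - (1 - 2 * G f y)^2) / (4 * (1 - 2 * G f y)))
    {x y : ℝ} (hx : 0 < x) (hxy : x ≤ y) (hGy : 0 < G f y) :
    (1 - 2 * G f y) / y = (1 - 2 * G f x) / x := by
  set K : ℝ → ℝ := fun z => (1 - 2 * G f z) / z with hKdef
  have hcont : ContinuousOn K (Icc x y) := by
    apply ContinuousOn.div
    · exact continuousOn_const.sub
        (continuousOn_const.mul ((h.G_contOn hx).mono Icc_subset_Ici_self))
    · exact continuousOn_id
    · intro z hz; exact ne_of_gt (hx.trans_le hz.1)
  have hderiv : ∀ z ∈ Ico x y, HasDerivWithinAt K 0 (Ici z) z := by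
    intro z hz
    have hz0 : 0 < z := hx.trans_le hz.1
    have hGz : 0 < G f z := lt_of_lt_of_le hGy (h.G_antitone hz0.le hz.2.le)
    have hk := h.key hid hz0 hGz
    have hW : HasDerivWithinAt (fun u => 1 - 2 * G f u) (2 * fp f z) (Ici z) z := by
      have := ((h.hasDerivG hz0.le).const_mul 2).const_sub 1
      rw [show 2 * fp f z = -(2 * -fp f z) by ring]; exact this
    have hK : HasDerivWithinAt K
        ((2 * fp f z * z - (1 - 2 * G f z) * 1) / z ^ 2) (Ici z) z :=
      hW.div (hasDerivWithinAt_id z _) (ne_of_gt hz0)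
    have hval : (2 * fp f z * z - (1 - 2 * G f z) * 1) / z ^ 2 = 0 := by
      rw [← hk]; ring
    rw [← hval]; exact hK
  have := constant_of_has_deriv_right_zero hcont hderiv y (right_mem_Icc.2 hxy)
  simpa [hKdef] using this


lemma exists_pos (h : Hyp f) : ∃ x : ℝ, 0 < x ∧ 0 < G f x := by
  by_contra hcon
  push_neg at hcon
  have hz : ∀ x : ℝ, 0 < x → G f x = 0 :=
    fun x hx => le_antisymm (hcon x hx) (h.G_nonneg hx.le)
  have hU : ⋃ n : ℕ, Ioi ((1:ℝ)/(n+1)) = Ioi 0 := by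
    ext x
    simp only [mem_iUnion, mem_Ioi]
    constructor
    · rintro ⟨n, hn⟩
      have : (0:ℝ) < 1/(n+1) := by positivity
      linarith
    · intro hx
      exact exists_nat_one_div_lt hx
  have hmono : Monotone (fun n : ℕ => Ioi ((1:ℝ)/(n+1))) := by
    intro n m hnm
    apply Ioi_subset_Ioi
    apply one_div_le_one_div_of_le (by positivity)
    exact_mod_cast by exact_mod_cast add_le_add_left (Nat.cast_le.2 hnm) 1
  have ht := tendsto_setIntegral_of_monotone (μ := volume) (f := f)
    (fun n : ℕ => measurableSet_Ioi) hmono (by rw [hU]; exact h.int)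
  rw [hU, h.total] at ht
  have hzero : (fun n : ℕ => ∫ x in Ioi ((1:ℝ)/(n+1)), f x) = fun _ => (0:ℝ) := by
    funext n
    exact hz _ (by positivity)
  rw [hzero] at ht
  have := tendsto_nhds_unique ht tendsto_const_nhds
  norm_num at this


lemma hid_of_alpha (h : Hyp f)
    (halpha : ∀ x : ℝ, 0 ≤ x →
      4 * (∫ t in (0:ℝ)..x, f t) * M f x - x / 2
        + 2 * x * (∫ t in (0:ℝ)..x, f t) ^ 2 = 0) :
    ∀ y : ℝ, 0 < y →
      M f y = y * (1 - (1 - 2 * G f y)^2) / (4 * (1 - 2 * G f y)) := by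
  intro y hy
  have hF : (∫ t in (0:ℝ)..y, f t) = (1 - 2 * G f y) / 2 := by
    rw [intervalIntegral.integral_of_le hy.le]
    have := h.W_eq hy.le
    linarith
  have ha := halpha y hy.le
  rw [hF] at ha
  have hw0 : (1 - 2 * G f y) ≠ 0 := ne_of_gt (h.W_pos hy)
  field_simp
  ring_nf
  ring_nf at ha
  nlinarith [ha]

lemma forward (h : Hyp f)
    (halpha : ∀ x : ℝ, 0 ≤ x →
      4 * (∫ t in (0:ℝ)..x, f t) * M f x - x / 2
        + 2 * x * (∫ t in (0:ℝ)..x, f t) ^ 2 = 0) :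
    ∃ a : ℝ, 0 < a ∧ ∀ t : ℝ, 0 < t → t ≠ a →
      f t = if t ≤ a then 1 / (2 * a) else 0 := by
  have hid := h.hid_of_alpha halpha
  obtain ⟨x₀, hx₀, hGx₀⟩ := h.exists_pos
  set c : ℝ := (1 - 2 * G f x₀) / x₀ with hcdef
  have hc : 0 < c := div_pos (h.W_pos hx₀) hx₀
  have hWlin : ∀ x : ℝ, 0 < x → 0 < G f x → 1 - 2 * G f x = c * x := by
    intro x hx hGx
    rcases le_total x x₀ with hle | hle
    · have hK := h.Kconst hid hx hle hGx₀
      rw [hcdef]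
      field_simp at hK ⊢
      nlinarith [hK]
    · have hK := h.Kconst hid hx₀ hle hGx
      rw [hcdef]
      field_simp at hK ⊢
      nlinarith [hK]
  have hlt : ∀ x : ℝ, 0 < x → 0 < G f x → x < 1 / c := by
    intro x hx hGx
    have h1 : 1 - 2 * G f x < 1 := by linarith
    have h2 := hWlin x hx hGx
    rw [lt_div_iff₀ hc]
    linarith
  set a : ℝ := 1 / c with hadef
  have ha : 0 < a := by positivity
  have hG0 : ∀ x : ℝ, a ≤ x → G f x = 0 := by
    intro x hx
    by_contra hne
    have hpos : 0 < G f x := lt_of_le_of_ne (h.G_nonneg (ha.le.trans hx)) (Ne.symm hne)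
    exact absurd (hlt x (ha.trans_le hx) hpos) (not_lt.2 hx)
  have claimA : ∀ x : ℝ, 0 < x → x < a → 0 < G f x := by
    intro x hx hxa
    by_contra hne
    have hGx : G f x = 0 := le_antisymm (not_lt.1 hne) (h.G_nonneg hx.le)
    set S : Set ℝ := {y | 0 < y ∧ G f y = 0} with hSdef
    have hxS : x ∈ S := ⟨hx, hGx⟩
    have hSne : S.Nonempty := ⟨x, hxS⟩
    have hSbdd : BddBelow S := ⟨0, fun y hy => hy.1.le⟩
    set b : ℝ := sInf S with hbdef
    have hbx : b ≤ x := csInf_le hSbdd hxS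
    have hx₀b : x₀ ≤ b := by
      apply le_csInf hSne
      intro y hy
      by_contra hc'
      push_neg at hc'
      have := h.G_antitone hy.1.le hc'.le
      rw [hy.2] at this
      linarith
    have hb0 : 0 < b := lt_of_lt_of_le hx₀ hx₀b
    have hGb : G f b = 0 := by
      have hble : ∀ ε : ℝ, 0 < ε → G f b ≤ ε * f b := by
        intro ε hε
        obtain ⟨y, hyS, hyb⟩ := exists_lt_of_csInf_lt hSne (by linarith : sInf S < b + ε)
        have hby : b ≤ y := csInf_le hSbdd hyS
        have hsplit := h.split hb0.le hby
        rw [hyS.2, add_zero] at hsplit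
        have h1 : (∫ t in Ioc b y, f t) ≤ (y - b) * fp f b := h.ioc_le hb0.le hby
        have h2 : fp f b ≤ f b := h.fp_le hb0.le
        have h3 : 0 ≤ f b := h.nonneg b hb0.le
        have h4 : 0 ≤ fp f b := h.fp_nonneg hb0.le
        nlinarith
      by_contra hGbne
      have hGbpos : 0 < G f b := lt_of_le_of_ne (h.G_nonneg hb0.le) (Ne.symm hGbne)
      have hfb : 0 ≤ f b := h.nonneg b hb0.le
      have := hble (G f b / (2 * (f b + 1))) (by positivity)
      have hkey : G f b / (2 * (f b + 1)) * f b < G f b := by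
        rw [div_mul_eq_mul_div, div_lt_iff₀ (by positivity)]
        nlinarith
      linarith
    -- for y in (0, b), G f y > 0 hence W y = c y; take left limit at b
    have hWcb : ∀ y : ℝ, 0 < y → y < b → 1 - 2 * G f y = c * y := by
      intro y hy hyb
      apply hWlin y hy
      by_contra hne'
      have : G f y = 0 := le_antisymm (not_lt.1 hne') (h.G_nonneg hy.le)
      exact absurd (csInf_le hSbdd ⟨hy, this⟩) (not_le.2 hyb)
    have htend : Filter.Tendsto (fun y => 1 - 2 * G f y) (nhdsWithin b (Iio b))
        (nhds (1 - 2 * G f b)) := by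
      have hcw : ContinuousWithinAt (G f) (Ici (b/2)) b :=
        (h.G_contOn (by linarith)) b (by simp [mem_Ici]; linarith)
      have h1 : Filter.Tendsto (G f) (nhdsWithin b (Ico (b/2) b)) (nhds (G f b)) :=
        hcw.tendsto.mono_left (nhdsWithin_mono b Ico_subset_Ici_self)
      have h2 : nhdsWithin b (Ico (b/2) b) = nhdsWithin b (Iio b) :=
        nhdsWithin_Ico_eq_nhdsLT (by linarith)
      rw [h2] at h1
      exact (tendsto_const_nhds.sub (h1.const_mul 2))
    have htend2 : Filter.Tendsto (fun y : ℝ => c * y) (nhdsWithin b (Iio b))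
        (nhds (c * b)) :=
      ((continuous_const.mul continuous_id).tendsto b).mono_left nhdsWithin_le_nhds
    have heq : (fun y => 1 - 2 * G f y) =ᶠ[nhdsWithin b (Iio b)] (fun y : ℝ => c * y) := by
      filter_upwards [Ioo_mem_nhdsLT_of_mem (⟨hb0, le_rfl⟩ : b ∈ Ioc (0:ℝ) b)]
        with y hy
      exact hWcb y hy.1 hy.2
    have hlim := tendsto_nhds_unique (htend.congr' heq) htend2
    rw [hGb] at hlim
    norm_num at hlim
    -- c * b = 1 so b = 1/c = a, contradiction with b ≤ x < a
    have hb_eq : b = a := by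
      rw [hadef, eq_div_iff (ne_of_gt hc)]
      linarith
    linarith
  -- values of f
  have hfpval : ∀ x : ℝ, 0 < x → x < a → fp f x = 1 / (2 * a) := by
    intro x hx hxa
    have hkey := h.key hid hx (claimA x hx hxa)
    have hW := hWlin x hx (claimA x hx hxa)
    rw [hW] at hkey
    have : fp f x = c / 2 := by
      field_simp at hkey ⊢
      nlinarith [hkey]
    rw [this, hadef]
    field_simp
  refine ⟨a, ha, ?_⟩
  intro t ht hta
  rcases lt_or_gt_of_ne hta with hlt2 | hgt
  · rw [if_pos hlt2.le]
    have h1 : f t ≤ fp f (t/2) := h.le_fp (by linarith) (by linarith)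
    have h2 : fp f (t/2) = 1 / (2*a) := hfpval (t/2) (by linarith) (by linarith)
    have h3 : fp f t ≤ f t := h.fp_le ht.le
    have h4 : fp f t = 1 / (2*a) := hfpval t ht hlt2
    linarith
  · rw [if_neg (not_le.2 hgt)]
    have hsplit := h.split ha.le hgt.le
    rw [hG0 a le_rfl, hG0 t hgt.le] at hsplit
    have h1 : (t - a) * f t ≤ ∫ s in Ioc a t, f s := h.le_ioc ha.le hgt.le
    have h2 : 0 ≤ f t := h.nonneg t ht.le
    nlinarith

end Hyp



lemma ioc_const' (c x y : ℝ) (hxy : x ≤ y) : (∫ _ in Ioc x y, c) = (y - x) * c := by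
  rw [setIntegral_const, Real.volume_real_Ioc_of_le hxy, smul_eq_mul]

lemma reverse {f : ℝ → ℝ} {a x : ℝ} (ha : 0 < a) (hx : 0 ≤ x)
    (hae : ∀ᵐ t ∂(volume.restrict (Set.Ici (0:ℝ))), f t = if t ≤ a then 1 / (2 * a) else 0) :
    4 * (∫ t in (0:ℝ)..x, f t) * (∫ t in Set.Ioi x, t * f t)
      - x / 2 + 2 * x * (∫ t in (0:ℝ)..x, f t) ^ 2 = 0 := by
  set g : ℝ → ℝ := fun t => if t ≤ a then 1 / (2 * a) else 0 with hgdef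
  have hFc : (∫ t in (0:ℝ)..x, f t) = min x a / (2 * a) := by
    rw [intervalIntegral.integral_of_le hx]
    have haeIoc : ∀ᵐ t ∂(volume.restrict (Ioc (0:ℝ) x)), f t = g t :=
      ae_restrict_of_ae_restrict_of_subset (fun t ht => le_of_lt ht.1) hae
    rw [integral_congr_ae haeIoc]
    rcases le_total x a with hxa | hxa
    · rw [setIntegral_congr_fun measurableSet_Ioc
        (fun t ht => if_pos (ht.2.trans hxa) : EqOn g (fun _ => 1/(2*a)) (Ioc 0 x)),
        ioc_const' _ _ _ hx, min_eq_left hxa]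
      ring
    · rw [← Ioc_union_Ioc_eq_Ioc ha.le hxa,
        setIntegral_union (Set.Ioc_disjoint_Ioc_of_le le_rfl) measurableSet_Ioc
          ((integrableOn_const measure_Ioc_lt_top.ne).congr_fun
            (fun t ht => (if_pos ht.2).symm) measurableSet_Ioc)
          ((integrableOn_zero).congr_fun
            (fun t ht => (if_neg (not_le.2 ht.1)).symm) measurableSet_Ioc),
        setIntegral_congr_fun measurableSet_Ioc
          (fun t ht => if_pos ht.2 : EqOn g (fun _ => 1/(2*a)) (Ioc 0 a)),
        setIntegral_congr_fun measurableSet_Ioc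
          (fun t ht => if_neg (not_le.2 ht.1) : EqOn g (fun _ => (0:ℝ)) (Ioc a x)),
        ioc_const' _ _ _ ha.le, min_eq_right hxa]
      rw [integral_zero, add_zero, sub_zero, mul_one_div]
  have hMc : (∫ t in Set.Ioi x, t * f t) = (a^2 - (min x a)^2) / (4 * a) := by
    have haeIoi : ∀ᵐ t ∂(volume.restrict (Ioi x)), t * f t = t * g t := by
      have h0 : ∀ᵐ t ∂(volume.restrict (Ioi x)), f t = g t :=
        ae_restrict_of_ae_restrict_of_subset (fun t ht => hx.trans (le_of_lt ht)) hae
      filter_upwards [h0] with t ht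
      rw [ht]
    rw [integral_congr_ae haeIoi]
    rcases le_total x a with hxa | hxa
    · rw [← Ioc_union_Ioi_eq_Ioi hxa,
        setIntegral_union (Ioc_disjoint_Ioi le_rfl) measurableSet_Ioi
          ((((continuous_id.mul continuous_const).integrableOn_Ioc).congr_fun
            (fun t ht => by rw [hgdef]; simp only [if_pos ht.2] : 
              EqOn (fun t => t * (1/(2*a))) (fun t => t * g t) (Ioc x a))
            measurableSet_Ioc))
          ((integrableOn_zero).congr_fun
            (fun t ht => by rw [hgdef]; simp only [if_neg (not_le.2 (mem_Ioi.1 ht)), mul_zero] :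
              EqOn (fun _ => (0:ℝ)) (fun t => t * g t) (Ioi a)) measurableSet_Ioi),
        setIntegral_congr_fun measurableSet_Ioc
          (fun t ht => by rw [hgdef]; simp only [if_pos ht.2] :
            EqOn (fun t => t * g t) (fun t => t * (1/(2*a))) (Ioc x a)),
        setIntegral_congr_fun measurableSet_Ioi
          (fun t ht => by rw [hgdef]; simp only [if_neg (not_le.2 (mem_Ioi.1 ht)), mul_zero] :
            EqOn (fun t => t * g t) (fun _ => (0:ℝ)) (Ioi a)),
        ← intervalIntegral.integral_of_le hxa]
      rw [intervalIntegral.integral_mul_const, _root_.integral_id, min_eq_left hxa,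
        integral_zero, add_zero]
      rw [div_mul_div_comm, mul_one, show (2:ℝ) * (2*a) = 4*a by ring]
    · rw [setIntegral_congr_fun measurableSet_Ioi
        (fun t ht => by rw [hgdef]; simp only [if_neg (not_le.2 (lt_of_le_of_lt hxa ht)), mul_zero] :
          EqOn (fun t => t * g t) (fun _ => (0:ℝ)) (Ioi x)), min_eq_right hxa]
      simp
  rw [hFc, hMc]
  rcases le_total x a with hxa | hxa
  · rw [min_eq_left hxa]
    field_simp
    ring
  · rw [min_eq_right hxa]
    field_simp
    ring

end AlphaUniform


open AlphaUniform in
/-- If `f` is nonnegative and non-increasing on `[0, ∞)` with `∫₀^∞ f = 1/2`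
and finite first moment, then
`α(x) = 4 (∫₀ˣ f)(∫ₓ^∞ t f(t) dt) − x/2 + 2x (∫₀ˣ f)² = 0` for all `x ≥ 0`
iff `f` is (a.e. on `[0, ∞)`) the density `1/(2a)` of a uniform distribution
on `[0, a]` scaled to total mass `1/2`, for some `a > 0`. -/
theorem alpha_eq_zero_iff_uniform
    (f : ℝ → ℝ) (hf_nonneg : ∀ t, 0 ≤ t → 0 ≤ f t)
    (hf_mono : ∀ x y : ℝ, 0 ≤ x → x ≤ y → f y ≤ f x)
    (hf_int : IntegrableOn f (Set.Ioi 0))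
    (hf_total : (∫ t in Set.Ioi (0:ℝ), f t) = 1 / 2)
    (hf_mom : IntegrableOn (fun t => t * f t) (Set.Ioi 0)) :
    (∀ x : ℝ, 0 ≤ x →
        4 * (∫ t in (0:ℝ)..x, f t) * (∫ t in Set.Ioi x, t * f t)
          - x / 2 + 2 * x * (∫ t in (0:ℝ)..x, f t) ^ 2 = 0)
      ↔ ∃ a : ℝ, 0 < a ∧
          ∀ᵐ t ∂(volume.restrict (Set.Ici (0:ℝ))),
            f t = if t ≤ a then 1 / (2 * a) else 0 := by
  have h : Hyp f := ⟨hf_nonneg, hf_mono, hf_int, hf_total, hf_mom⟩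
  constructor
  · intro halpha
    obtain ⟨a, ha, hval⟩ := h.forward (fun x hx => halpha x hx)
    refine ⟨a, ha, ?_⟩
    have hnull : (volume : Measure ℝ) ({0, a} : Set ℝ) = 0 :=
      (Set.toFinite ({0, a} : Set ℝ)).measure_zero _
    rw [ae_restrict_iff' measurableSet_Ici]
    have hae0 : ∀ᵐ t : ℝ ∂volume, t ∉ ({0, a} : Set ℝ) :=
      measure_eq_zero_iff_ae_notMem.1 hnull
    filter_upwards [hae0] with t ht hti
    simp only [Set.mem_insert_iff, Set.mem_singleton_iff, not_or] at ht
    have ht0 : 0 < t := lt_of_le_of_ne hti (Ne.symm ht.1)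
    exact hval t ht0 ht.2
  · rintro ⟨a, ha, hae⟩ x hx
    exact reverse ha hx hae
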